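/- Let $\rho: \mathcal{L}^{\infty}(\Omega, \mathcal{F}) \to \mathbb{R}$ be a finite, convex, monotone function, and suppose $\mu \in \mathbf{ba}$ satisfies $\rho^*(\mu) := \sup_{X} \int X d\mu - \rho(X) < \infty$. If $\rho$ is continuous from above (i.e., $X_n \downarrow X$ pointwise with $X_n, X \in \mathcal{L}^{\infty}$ implies $\rho(X_n) \downarrow \rho(X)$), then $\mu$ is countably additive, i.e., for every sequence of sets $A_n \in \mathcal{F}$ decreasing to $\emptyset$ one has $\mu(A_n) \to 0$. -/

import Mathlib

/-!
Statement 4: If `ρ : 𝓛^∞ → ℝ` is finite, convex, monotone and continuous from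
above, then any `μ ∈ ba` with finite conjugate `ρ*(μ)` is countably additive:
`μ(A_n) → 0` whenever `A_n ↓ ∅`.
-/

open MeasureTheory

def BM (Ω : Type*) [MeasurableSpace Ω] : Submodule ℝ (Ω → ℝ) where
  carrier := {f | Measurable f ∧ ∃ C : ℝ, ∀ ω, |f ω| ≤ C}
  add_mem' := by
    rintro f g ⟨hf, Cf, hCf⟩ ⟨hg, Cg, hCg⟩
    exact ⟨hf.add hg, Cf + Cg, fun ω =>
      (abs_add_le _ _).trans (add_le_add (hCf ω) (hCg ω))⟩
  zero_mem' := ⟨measurable_const, 0, fun ω => by simp⟩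
  smul_mem' := by
    rintro c f ⟨hf, Cf, hCf⟩
    refine ⟨hf.const_smul c, |c| * Cf, fun ω => ?_⟩
    have h : |(c • f) ω| = |c| * |f ω| := by simp [abs_mul]
    rw [h]
    exact mul_le_mul_of_nonneg_left (hCf ω) (abs_nonneg c)

variable {Ω : Type*} [MeasurableSpace Ω]

noncomputable instance : PartialOrder (BM Ω) :=
  PartialOrder.lift (fun f => (f : Ω → ℝ)) Subtype.coe_injective

noncomputable def indBM (A : Set Ω) (hA : MeasurableSet A) : BM Ω :=
  ⟨A.indicator fun _ => (1 : ℝ),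
    (measurable_const (a := (1 : ℝ))).indicator hA, 1, fun ω => by
      by_cases h : ω ∈ A <;> simp [Set.indicator_apply, h]⟩

noncomputable def rstar (ρ : BM Ω → ℝ) (μ : BM Ω → ℝ) : EReal :=
  ⨆ X : BM Ω, ((μ X - ρ X : ℝ) : EReal)

theorem stmt4 (ρ : BM Ω → ℝ)
    -- ρ is convex
    (hconv : ∀ X Y : BM Ω, ∀ t : ℝ, 0 ≤ t → t ≤ 1 →
      ρ (t • X + (1 - t) • Y) ≤ t * ρ X + (1 - t) * ρ Y)
    -- ρ is monotone
    (hmono : ∀ X Y : BM Ω, X ≤ Y → ρ X ≤ ρ Y)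
    -- ρ is continuous from above
    (hca : ∀ (X : ℕ → BM Ω) (Y : BM Ω),
      (∀ n m : ℕ, n ≤ m → X m ≤ X n) →
      (∀ ω, Filter.Tendsto (fun n => (X n : Ω → ℝ) ω) Filter.atTop (nhds ((Y : Ω → ℝ) ω))) →
      Filter.Tendsto (fun n => ρ (X n)) Filter.atTop (nhds (ρ Y)))
    -- μ ∈ ba with finite conjugate
    (μ : BM Ω → ℝ) (hlin : IsLinearMap ℝ μ)
    (hbdd : ∃ M : ℝ, ∀ (X : BM Ω) (C : ℝ), (∀ ω, |(X : Ω → ℝ) ω| ≤ C) → |μ X| ≤ M * C)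
    (hfin : rstar ρ μ ≠ ⊤) :
    -- μ is countably additive
    ∀ (A : ℕ → Set Ω) (hA : ∀ n, MeasurableSet (A n)),
      (∀ n m : ℕ, n ≤ m → A m ⊆ A n) → (⋂ n, A n) = ∅ →
      Filter.Tendsto (fun n => μ (indBM (A n) (hA n))) Filter.atTop (nhds 0) := by
  intro A hA hAanti hAempty
  have hne_bot : rstar ρ μ ≠ ⊥ := by
    intro hb
    have h : ((μ 0 - ρ 0 : ℝ) : EReal) ≤ rstar ρ μ :=
      le_iSup (fun X : BM Ω => ((μ X - ρ X : ℝ) : EReal)) 0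
    rw [hb, le_bot_iff] at h
    exact EReal.coe_ne_bot _ h
  set r := (rstar ρ μ).toReal with hr
  have hkey : ∀ X : BM Ω, μ X - ρ X ≤ r := by
    intro X
    have h1 : ((μ X - ρ X : ℝ) : EReal) ≤ rstar ρ μ :=
      le_iSup (fun X : BM Ω => ((μ X - ρ X : ℝ) : EReal)) X
    rw [← EReal.coe_toReal hfin hne_bot] at h1
    exact_mod_cast h1
  have hμ0 : μ 0 = 0 := hlin.map_zero
  -- positivity of μ on nonnegative elements
  have hpos : ∀ X : BM Ω, (∀ ω, 0 ≤ (X : Ω → ℝ) ω) → 0 ≤ μ X := by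
    intro X hX
    by_contra h
    push_neg at h
    have hc0 : (0:ℝ) < ρ 0 + r + 1 := by
      have := hkey 0
      rw [hμ0] at this
      linarith
    set k : ℝ := (ρ 0 + r + 1) / (-μ X) with hk
    have hkpos : 0 < k := div_pos hc0 (by linarith)
    have hle : (-k) • X ≤ (0 : BM Ω) := by
      show (((-k) • X : BM Ω) : Ω → ℝ) ≤ ((0 : BM Ω) : Ω → ℝ)
      intro ω
      simp only [Submodule.coe_smul, Pi.smul_apply, smul_eq_mul, ZeroMemClass.coe_zero,
        Pi.zero_apply]
      have := hX ω
      nlinarith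
    have hρle : ρ ((-k) • X) ≤ ρ 0 := hmono _ _ hle
    have hμk : μ ((-k) • X) = ρ 0 + r + 1 := by
      rw [hlin.map_smul]
      have : -μ X ≠ 0 := by linarith
      have e : k * (-μ X) = ρ 0 + r + 1 := by rw [hk]; exact div_mul_cancel₀ _ this
      rw [smul_eq_mul]
      linarith [e]
    have := hkey ((-k) • X)
    rw [hμk] at this
    linarith
  -- main argument
  rw [Metric.tendsto_atTop]
  intro ε hε
  have hc0 : (0:ℝ) < ρ 0 + r + 1 := by
    have := hkey 0
    rw [hμ0] at this
    linarith
  set c : ℝ := ρ 0 + r + 1 with hc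
  set k : ℝ := c / ε + 1 with hkdef
  have hkpos : 0 < k := by positivity
  -- the decreasing sequence k • 1_{A n}
  set X : ℕ → BM Ω := fun n => k • indBM (A n) (hA n) with hX
  have hanti : ∀ n m : ℕ, n ≤ m → X m ≤ X n := by
    intro n m hnm
    show ((X m : BM Ω) : Ω → ℝ) ≤ ((X n : BM Ω) : Ω → ℝ)
    intro ω
    simp only [hX, Submodule.coe_smul, Pi.smul_apply, smul_eq_mul, indBM]
    refine mul_le_mul_of_nonneg_left ?_ hkpos.le
    exact Set.indicator_le_indicator_of_subset (hAanti n m hnm) (fun _ => zero_le_one) ω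
  have hptw : ∀ ω, Filter.Tendsto (fun n => (X n : Ω → ℝ) ω) Filter.atTop
      (nhds (((0 : BM Ω) : Ω → ℝ) ω)) := by
    intro ω
    obtain ⟨N, hN⟩ : ∃ N, ω ∉ A N := by
      by_contra h
      push_neg at h
      have hmem : ω ∈ ⋂ n, A n := Set.mem_iInter.2 h
      rw [hAempty] at hmem
      exact hmem
    have : ((0 : BM Ω) : Ω → ℝ) ω = 0 := rfl
    rw [this]
    apply Filter.Tendsto.congr' _ tendsto_const_nhds
    filter_upwards [Filter.eventually_ge_atTop N] with n hn
    have hnot : ω ∉ A n := fun hmem => hN (hAanti N n hn hmem)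
    simp [hX, indBM, Set.indicator_of_notMem hnot]
  have htend : Filter.Tendsto (fun n => ρ (X n)) Filter.atTop (nhds (ρ 0)) :=
    hca X 0 hanti hptw
  have hev : ∀ᶠ n in Filter.atTop, ρ (X n) < ρ 0 + 1 :=
    htend.eventually_lt_const (by linarith)
  obtain ⟨N, hN⟩ := Filter.eventually_atTop.mp hev
  refine ⟨N, fun n hn => ?_⟩
  have hnonneg : 0 ≤ μ (indBM (A n) (hA n)) := by
    apply hpos
    intro ω
    simp only [indBM]
    exact Set.indicator_nonneg (fun _ _ => zero_le_one) ω
  have hup : k * μ (indBM (A n) (hA n)) < c := by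
    have h1 := hkey (X n)
    have h2 : μ (X n) = k * μ (indBM (A n) (hA n)) := by
      rw [hX]; exact hlin.map_smul k _
    have h3 := hN n hn
    rw [h2] at h1
    simp only [hc]
    linarith
  have hck : c < ε * k := by
    have : ε * k = c + ε := by
      rw [hkdef]
      field_simp
    rw [this]
    linarith
  rw [Real.dist_eq, sub_zero, abs_of_nonneg hnonneg]
  have : k * μ (indBM (A n) (hA n)) < ε * k := lt_trans hup hck
  nlinarith
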